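/- Let a be a nonzero element of GF(2^n), L a multiple of lcm(n,k), and ξ a (2^L+1)-th root of unity with ξ ≠ 1 in the algebraic closure of GF(2). Then x₀ = T_k^L(T_2(a/(ξ+1))) satisfies T_k(x₀) = a, and the full solution set of T_k(x) = a in the algebraic closure is x₀ + { y + y^2 : y ∈ GF(2^k) }. -/

import Mathlib

/-- `T l k x = ∑_{i=0}^{k/l - 1} x^(2^(l*i))`, the linearized trace-like polynomial. -/
noncomputable def T {F : Type*} [Field F] (l k : ℕ) (x : F) : F :=
  ∑ i ∈ Finset.range (k / l), x ^ (2 ^ (l * i))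

variable {F : Type*} [Field F] [CharP F 2]

private lemma fact2 : Fact (Nat.Prime 2) := ⟨Nat.prime_two⟩

-- additivity
lemma T_add (l k : ℕ) (x y : F) : T l k (x + y) = T l k x + T l k y := by
  have := @fact2
  simp only [T, ← Finset.sum_add_distrib]
  exact Finset.sum_congr rfl fun i _ => add_pow_char_pow x y 2 _

set_option linter.unusedSectionVars false in
lemma T_one (k : ℕ) (x : F) : T 1 k x = ∑ i ∈ Finset.range k, x ^ (2 ^ i) := by
  simp [T]

-- telescoping: T 1 m (b + b^2) = b + b^(2^m)
lemma T_telescope (m : ℕ) (b : F) : T 1 m (b + b ^ 2) = b + b ^ (2 ^ m) := by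
  have h2 : ∀ x : F, x + x = 0 := fun x => CharTwo.add_self_eq_zero x
  have key : ∀ i : ℕ, (b + b ^ 2) ^ (2 ^ i) = b ^ (2 ^ i) + b ^ (2 ^ (i + 1)) := by
    have := @fact2
    intro i
    rw [add_pow_char_pow (p := 2), ← pow_mul, pow_succ']
  rw [T_one]
  calc ∑ i ∈ Finset.range m, (b + b ^ 2) ^ (2 ^ i)
      = ∑ i ∈ Finset.range m, (b ^ (2 ^ (i+1)) - b ^ (2 ^ i)) := by
        refine Finset.sum_congr rfl fun i _ => ?_
        rw [key i, CharTwo.sub_eq_add, add_comm]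
    _ = b ^ (2 ^ m) - b ^ (2 ^ 0) := Finset.sum_range_sub (fun i => b ^ (2 ^ i)) m
    _ = b + b ^ (2 ^ m) := by rw [CharTwo.sub_eq_add, pow_zero, pow_one, add_comm]

lemma sum_grid (k m : ℕ) (f : ℕ → F) :
    ∑ j ∈ Finset.range m, ∑ i ∈ Finset.range k, f (k * j + i)
      = ∑ i ∈ Finset.range (k * m), f i := by
  induction m with
  | zero => simp
  | succ m ih => rw [Finset.sum_range_succ, ih, Nat.mul_succ, Finset.sum_range_add]

-- composition
set_option maxHeartbeats 1000000 in
lemma T_comp (k L : ℕ) (hk : 0 < k) (hkL : k ∣ L) (z : F) :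
    T 1 k (T k L z) = T 1 L z := by
  have := @fact2
  obtain ⟨m, rfl⟩ := hkL
  rw [T_one, T_one]
  have hdiv : k * m / k = m := Nat.mul_div_cancel_left m hk
  simp only [T, hdiv]
  calc ∑ i ∈ Finset.range k, (∑ j ∈ Finset.range m, z ^ 2 ^ (k * j)) ^ 2 ^ i
      = ∑ i ∈ Finset.range k, ∑ j ∈ Finset.range m, z ^ 2 ^ (k * j + i) := by
        refine Finset.sum_congr rfl fun i _ => ?_
        rw [sum_pow_char_pow]
        refine Finset.sum_congr rfl fun j _ => ?_
        rw [← pow_mul, ← pow_add]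
    _ = ∑ j ∈ Finset.range m, ∑ i ∈ Finset.range k, z ^ 2 ^ (k * j + i) :=
        Finset.sum_comm
    _ = ∑ i ∈ Finset.range (k * m), z ^ 2 ^ i := sum_grid k m (fun i => z ^ 2 ^ i)

-- shift lemma
lemma sum_shift (m : ℕ) (b : F) :
    ∑ i ∈ Finset.range m, b ^ (2 ^ (i + 1))
      = (∑ i ∈ Finset.range m, b ^ 2 ^ i) + b + b ^ (2 ^ m) := by
  have h1 := Finset.sum_range_succ (fun i => b ^ 2 ^ i) m
  have h2 := Finset.sum_range_succ' (fun i => b ^ 2 ^ i) m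
  rw [h1] at h2
  rw [pow_zero, pow_one] at h2
  have h0 : ∀ x : F, x + x = 0 := fun x => CharTwo.add_self_eq_zero x
  linear_combination -h2 - h0 b

lemma T_sq (k : ℕ) (w : F) : T 1 k w ^ 2 = T 1 k w + w + w ^ (2 ^ k) := by
  have := @fact2
  rw [T_one, sum_pow_char (p := 2)]
  calc ∑ i ∈ Finset.range k, (w ^ 2 ^ i) ^ 2
      = ∑ i ∈ Finset.range k, w ^ 2 ^ (i + 1) := by
        refine Finset.sum_congr rfl fun i _ => ?_
        rw [← pow_mul, pow_succ]
    _ = _ := sum_shift k w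

-- existence of θ with trace 1
lemma exists_theta [IsAlgClosed F] (k : ℕ) (hk : 0 < k) :
    ∃ θ : F, θ ^ (2 ^ k) = θ ∧ T 1 k θ = 1 := by
  classical
  have := @fact2
  set p : Polynomial F := Polynomial.X ^ (2 ^ k) - Polynomial.X with hp
  set q : Polynomial F := ∑ i ∈ Finset.range k, Polynomial.X ^ (2 ^ i) with hq
  have h1lt : 1 < 2 ^ k := Nat.one_lt_two_pow_iff.mpr hk.ne'
  have hpdeg : p.natDegree = 2 ^ k := FiniteField.X_pow_card_sub_X_natDegree_eq F h1lt
  have hpne : p ≠ 0 := FiniteField.X_pow_card_sub_X_ne_zero F h1lt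
  have hpsep : p.Separable := galois_poly_separable 2 (2 ^ k) (dvd_pow_self 2 hk.ne')
  have hsplits : p.Splits := IsAlgClosed.splits p
  have hcard : p.roots.card = 2 ^ k := by
    rw [Polynomial.splits_iff_card_roots.mp hsplits, hpdeg]
  have hnodup : p.roots.Nodup := Polynomial.nodup_roots hpsep
  -- q has small degree
  have hqdeg : q.natDegree ≤ 2 ^ (k - 1) := by
    refine (Polynomial.natDegree_sum_le _ _).trans ?_
    rw [Finset.fold_max_le]
    refine ⟨Nat.zero_le _, fun i hi => ?_⟩
    simp only [Function.comp]
    calc (Polynomial.X ^ (2 ^ i) : Polynomial F).natDegree ≤ 2 ^ i :=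
          le_of_eq (Polynomial.natDegree_X_pow _)
      _ ≤ 2 ^ (k - 1) := Nat.pow_le_pow_right (by norm_num)
          (Nat.le_sub_one_of_lt (Finset.mem_range.mp hi))
  have hqne : q ≠ 0 := by
    intro h
    have : q.coeff 1 = 1 := by
      rw [hq, Polynomial.finset_sum_coeff]
      rw [Finset.sum_eq_single 0]
      · simp
      · intro i hi hne
        rw [Polynomial.coeff_X_pow]
        have : 2 ^ i ≠ 1 := by
          intro he
          exact hne (by
            rcases Nat.eq_zero_or_pos i with h0 | h0
            · exact h0
            · exfalso; exact absurd he (Nat.ne_of_gt (Nat.one_lt_two_pow_iff.mpr h0.ne')))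
        simp [this.symm, Ne.symm this]
      · intro h0; exact absurd (Finset.mem_range.mpr hk) h0
    rw [h] at this
    simp at this
  -- find θ : root of p not root of q
  have : ¬ (∀ θ ∈ p.roots.toFinset, q.eval θ = 0) := by
    intro hall
    have hsub : p.roots.toFinset ⊆ q.roots.toFinset := by
      intro θ hθ
      rw [Multiset.mem_toFinset, Polynomial.mem_roots hqne]
      exact hall θ hθ
    have c1 : p.roots.toFinset.card = 2 ^ k := by
      rw [Multiset.toFinset_card_of_nodup hnodup, hcard]
    have c2 : q.roots.toFinset.card ≤ 2 ^ (k - 1) := by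
      calc q.roots.toFinset.card ≤ q.roots.card := Multiset.toFinset_card_le _
        _ ≤ q.natDegree := q.card_roots' 
        _ ≤ 2 ^ (k - 1) := hqdeg
    have := (Finset.card_le_card hsub).trans c2
    rw [c1] at this
    have hlt : 2 ^ (k - 1) < 2 ^ k := Nat.pow_lt_pow_right (by norm_num) (by omega)
    omega
  push_neg at this
  obtain ⟨θ, hθmem, hθq⟩ := this
  have hθp : θ ^ (2 ^ k) = θ := by
    have := Multiset.mem_toFinset.mp hθmem
    rw [Polynomial.mem_roots hpne, Polynomial.IsRoot.def, hp] at this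
    simp only [Polynomial.eval_sub, Polynomial.eval_pow, Polynomial.eval_X] at this
    exact sub_eq_zero.mp this
  have hqeval : q.eval θ = T 1 k θ := by
    rw [hq, T_one, Polynomial.eval_finset_sum]
    simp
  have ht : T 1 k θ ≠ 0 := by rw [← hqeval]; exact hθq
  have htsq : T 1 k θ ^ 2 = T 1 k θ := by
    rw [T_sq, hθp]
    have h0 : θ + θ = 0 := CharTwo.add_self_eq_zero θ
    linear_combination h0
  refine ⟨θ, hθp, ?_⟩
  have : T 1 k θ * (T 1 k θ - 1) = 0 := by ring_nf; linear_combination htsq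
  rcases mul_eq_zero.mp this with h | h
  · exact absurd h ht
  · exact sub_eq_zero.mp h

lemma ker_mem (k : ℕ) (hk : 0 < k) (y : F) (hy : y ^ (2 ^ k) = y) :
    T 1 k (y + y ^ 2) = 0 := by
  rw [T_telescope, hy, CharTwo.add_self_eq_zero]

lemma ker_surj [IsAlgClosed F] (k : ℕ) (hk : 0 < k) (w : F) (hw : T 1 k w = 0) :
    ∃ y : F, y ^ (2 ^ k) = y ∧ y + y ^ 2 = w := by
  have := @fact2
  have h2 : (2 : F) = 0 := by
    have := CharTwo.add_self_eq_zero (1 : F); linear_combination this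
  have hwk : w ^ (2 ^ k) = w := by
    have := T_sq k w
    rw [hw] at this
    linear_combination -this - h2 * w
  obtain ⟨θ, hθ, hθT⟩ := exists_theta (F := F) k hk
  set s : ℕ → F := fun i => ∑ j ∈ Finset.range i, w ^ (2 ^ j) with hs
  set y : F := ∑ i ∈ Finset.range k, s i * θ ^ (2 ^ i) with hy
  have hs_sq : ∀ i, (s i) ^ 2 = s i + w + w ^ (2 ^ i) := by
    intro i
    rw [hs]
    rw [sum_pow_char (p := 2)]
    calc ∑ j ∈ Finset.range i, (w ^ 2 ^ j) ^ 2
        = ∑ j ∈ Finset.range i, w ^ 2 ^ (j + 1) := by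
          refine Finset.sum_congr rfl fun j _ => ?_
          rw [← pow_mul, pow_succ]
      _ = _ := sum_shift i w
  have hsk : s k = 0 := by
    show (∑ j ∈ Finset.range k, w ^ (2 ^ j)) = 0
    rw [← T_one]; exact hw
  have hs0 : s 0 = 0 := by simp [hs]
  -- y^2
  have hy2 : y ^ 2 = ∑ i ∈ Finset.range k, (s i + w) * θ ^ (2 ^ i) := by
    have step1 : y ^ 2 = ∑ i ∈ Finset.range k, (s (i + 1) + w) * θ ^ (2 ^ (i + 1)) := by
      rw [hy, sum_pow_char (p := 2)]
      refine Finset.sum_congr rfl fun i _ => ?_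
      rw [mul_pow, ← pow_mul, ← pow_succ]
      congr 1
      have := hs_sq i
      have hsucc : s (i + 1) = s i + w ^ (2 ^ i) := Finset.sum_range_succ _ i
      linear_combination hsucc - this + (s i ^ 2 - w - s (i + 1)) * h2
    rw [step1]
    set h : ℕ → F := fun i => (s i + w) * θ ^ (2 ^ i) with hh
    have e1 := Finset.sum_range_succ h k
    have e2 := Finset.sum_range_succ' h k
    have hk0 : h 0 = w * θ := by simp [hh, hs0]
    have hkk : h k = w * θ := by
      rw [hh]; simp only [hsk, hθ, zero_add]
    rw [e1, hk0, hkk] at e2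
    -- e2 : ∑_{range k} h + w*θ = ∑_{range k} h (i+1) + w*θ
    have : ∑ i ∈ Finset.range k, h (i + 1) = ∑ i ∈ Finset.range k, h i := by
      linear_combination -e2
    rw [this]
  have hyw : y + y ^ 2 = w := by
    rw [hy, hy2, ← Finset.sum_add_distrib]
    have : ∀ i ∈ Finset.range k, s i * θ ^ 2 ^ i + (s i + w) * θ ^ 2 ^ i
        = w * θ ^ 2 ^ i := by
      intro i _
      linear_combination (s i * θ ^ 2 ^ i) * h2
    rw [Finset.sum_congr rfl this, ← Finset.mul_sum, ← T_one, hθT, mul_one]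
  have hyk : y ^ (2 ^ k) = y := by
    rw [hy, sum_pow_char_pow (p := 2)]
    refine Finset.sum_congr rfl fun i _ => ?_
    rw [mul_pow]
    congr 1
    · rw [hs, sum_pow_char_pow (p := 2)]
      refine Finset.sum_congr rfl fun j _ => ?_
      rw [← pow_mul, mul_comm (2 ^ j) (2 ^ k), pow_mul, hwk]
    · rw [← pow_mul, mul_comm (2 ^ i) (2 ^ k), pow_mul, hθ]
  exact ⟨y, hyk, hyw⟩

lemma pow_pow_of_dvd (a : F) (n L : ℕ) (ha : a ^ (2 ^ n) = a) (h : n ∣ L) :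
    a ^ (2 ^ L) = a := by
  obtain ⟨t, rfl⟩ := h
  induction t with
  | zero => simp
  | succ t ih => rw [Nat.mul_succ, pow_add, pow_mul, ih, ha]

set_option maxHeartbeats 1000000 in
theorem stmt_16 (n k L : ℕ) (hn : 0 < n) (hk : 0 < k)
    (hnL : n ∣ L) (hkL : k ∣ L)
    (a ξ : AlgebraicClosure (ZMod 2)) (ha : a ^ (2 ^ n) = a) (ha0 : a ≠ 0)
    (hξ : ξ ^ (2 ^ L + 1) = 1) (hξ1 : ξ ≠ 1) :
    T 1 k (T k L (a / (ξ + 1) + (a / (ξ + 1)) ^ 2)) = a ∧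
    {x : AlgebraicClosure (ZMod 2) | T 1 k x = a} =
      (fun y : AlgebraicClosure (ZMod 2) =>
          T k L (a / (ξ + 1) + (a / (ξ + 1)) ^ 2) + (y + y ^ 2)) ''
        {y : AlgebraicClosure (ZMod 2) | y ^ (2 ^ k) = y} := by
  have := @fact2
  have h2 : (2 : AlgebraicClosure (ZMod 2)) = 0 := by
    have := CharTwo.add_self_eq_zero (1 : AlgebraicClosure (ZMod 2)); linear_combination this
  have hξ0 : ξ ≠ 0 := by
    intro h; rw [h] at hξ; simp at hξ
  have hξp1 : ξ + 1 ≠ 0 := by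
    intro h
    apply hξ1
    have : ξ = -1 := by linear_combination h
    rw [this, CharTwo.neg_eq]
  have hξinv : ξ⁻¹ + 1 ≠ 0 := by
    intro h
    apply hξ1
    have : ξ⁻¹ = -1 := by linear_combination h
    rw [CharTwo.neg_eq] at this
    rw [← inv_inv ξ, this, inv_one]
  have hξL : ξ ^ (2 ^ L) = ξ⁻¹ := by
    have hmul : ξ ^ (2 ^ L) * ξ = 1 := by
      rw [← pow_succ]; exact hξ
    exact eq_inv_of_mul_eq_one_left (by linear_combination hmul)
  have haL : a ^ (2 ^ L) = a := pow_pow_of_dvd a n L ha hnL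
  set b : AlgebraicClosure (ZMod 2) := a / (ξ + 1) with hbdef
  have hbL : b ^ (2 ^ L) = a / (ξ⁻¹ + 1) := by
    rw [hbdef, div_pow, add_pow_char_pow (p := 2), one_pow, haL, hξL]
  have hbsum : b + b ^ (2 ^ L) = a := by
    rw [hbL, hbdef]
    rw [show a / (ξ⁻¹ + 1) = a * ξ / (ξ + 1) from by
      rw [div_eq_div_iff hξinv hξp1]
      have hc := mul_inv_cancel₀ hξ0
      linear_combination (-a) * hc]
    rw [← add_div, show a + a * ξ = a * (ξ + 1) from by ring,
      mul_div_cancel_right₀ a hξp1]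
  set x₀ : AlgebraicClosure (ZMod 2) := T k L (b + b ^ 2) with hx0
  have key1 : T 1 k x₀ = a := by
    rw [hx0, T_comp k L hk hkL, T_telescope, hbsum]
  refine ⟨key1, ?_⟩
  ext x
  simp only [Set.mem_setOf_eq, Set.mem_image]
  constructor
  · intro hx
    have h0 : T 1 k (x + x₀) = 0 := by
      rw [T_add, hx, key1, CharTwo.add_self_eq_zero]
    obtain ⟨y, hy1, hy2⟩ := ker_surj k hk _ h0
    exact ⟨y, hy1, by linear_combination hy2 + x₀ * h2⟩
  · rintro ⟨y, hy, rfl⟩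
    rw [T_add, key1, ker_mem k hk y hy, add_zero]
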